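/- Let f ∈ ℂ[z] be a nonconstant polynomial all of whose coefficients are algebraic numbers, let v_b ≠ v_w be distinct complex numbers such that f(u) ∈ {v_b, v_w} whenever f′(u) = 0, let u ∈ ℂ satisfy f(u) = v₀ = (v_b + v_w)/2, and let (ψ, η) be the unique pair of affine maps ψ(z) = az + b (a ≠ 0), η(z) = cz + d (c ≠ 0) with ψ(v_b) = −1, ψ(v_w) = +1, η(0) = u, and (ψ∘f∘η)′(0) = 1. Then every coefficient of the polynomial f₁ = ψ∘f∘η is an algebraic number. -/

import Mathlib

open Polynomial


noncomputable def AC := algebraicClosure ℚ ℂ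

lemma alg_iff_mem_range (x : ℂ) :
    IsAlgebraic ℚ x ↔ x ∈ Set.range (algebraMap (algebraicClosure ℚ ℂ) ℂ) := by
  rw [← mem_algebraicClosure_iff]
  constructor
  · intro h; exact ⟨⟨x, h⟩, rfl⟩
  · rintro ⟨⟨y, hy⟩, rfl⟩; exact hy

lemma coeffs_alg_iff_lifts (p : ℂ[X]) :
    (∀ n, IsAlgebraic ℚ (p.coeff n)) ↔ p ∈ Polynomial.lifts (algebraMap (algebraicClosure ℚ ℂ) ℂ) := by
  rw [Polynomial.lifts_iff_coeff_lifts]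
  exact forall_congr' fun n => alg_iff_mem_range _

lemma comp_mem_lifts {p q : ℂ[X]}
    (hp : p ∈ Polynomial.lifts (algebraMap (algebraicClosure ℚ ℂ) ℂ))
    (hq : q ∈ Polynomial.lifts (algebraMap (algebraicClosure ℚ ℂ) ℂ)) :
    p.comp q ∈ Polynomial.lifts (algebraMap (algebraicClosure ℚ ℂ) ℂ) := by
  rw [Polynomial.mem_lifts] at hp hq ⊢
  obtain ⟨P, rfl⟩ := hp; obtain ⟨Q, rfl⟩ := hq
  exact ⟨P.comp Q, Polynomial.map_comp _ _ _⟩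

lemma eval_alg {p : ℂ[X]} (hp : ∀ n, IsAlgebraic ℚ (p.coeff n)) {z : ℂ}
    (hz : IsAlgebraic ℚ z) : IsAlgebraic ℚ (p.eval z) := by
  rw [coeffs_alg_iff_lifts, Polynomial.mem_lifts] at hp
  obtain ⟨P, rfl⟩ := hp
  rw [alg_iff_mem_range] at hz ⊢
  obtain ⟨w, rfl⟩ := hz
  exact ⟨P.eval w, by rw [Polynomial.eval_map, Polynomial.eval₂_at_apply]⟩

lemma root_alg {p : ℂ[X]} (hp0 : p ≠ 0) (hp : ∀ n, IsAlgebraic ℚ (p.coeff n)) {z : ℂ}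
    (hz : p.eval z = 0) : IsAlgebraic ℚ z := by
  rw [coeffs_alg_iff_lifts, Polynomial.mem_lifts] at hp
  obtain ⟨P, rfl⟩ := hp
  have hP : P ≠ 0 := by rintro rfl; simp at hp0
  have halgz : IsAlgebraic (algebraicClosure ℚ ℂ) z :=
    ⟨P, hP, by rw [Polynomial.aeval_def, ← Polynomial.eval_map]; exact hz⟩
  have : IsIntegral (algebraicClosure ℚ ℂ) z := isAlgebraic_iff_isIntegral.mp halgz
  haveI hI : Algebra.IsIntegral ℚ (algebraicClosure ℚ ℂ) := @Algebra.IsAlgebraic.isIntegral _ _ _ _ _ (algebraicClosure.isAlgebraic ℚ ℂ); exact (isIntegral_trans z this).isAlgebraic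

lemma deriv_coeffs_alg {p : ℂ[X]} (hp : ∀ n, IsAlgebraic ℚ (p.coeff n)) :
    ∀ n, IsAlgebraic ℚ ((derivative p).coeff n) := by
  intro n
  rw [Polynomial.coeff_derivative]
  have h1 : IsAlgebraic ℚ ((n : ℂ) + 1) := by exact_mod_cast isAlgebraic_nat (R := ℚ) (A := ℂ) (n + 1)
  exact ((hp (n+1)).isIntegral.mul h1.isIntegral).isAlgebraic


lemma single_root {h : ℂ[X]} (hn : 2 ≤ h.natDegree)
    (hcrit : ∀ z : ℂ, (derivative h).eval z = 0 → h.eval z = 0) :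
    ∃ r : ℂ, h = C h.leadingCoeff * (X - C r) ^ h.natDegree := by
  classical
  set n := h.natDegree with hn_def
  have h0 : h ≠ 0 := fun hz => by simp [hz] at hn_def; omega
  have hsplit : Splits h := IsAlgClosed.splits h
  have hcard : h.roots.card = n := (splits_iff_card_roots.mp hsplit)
  -- derivative
  have hdc : (derivative h).coeff (n - 1) = h.coeff n * n := by
    have : n - 1 + 1 = n := by omega
    rw [coeff_derivative, this, Nat.cast_sub (by omega : 1 ≤ n)]; push_cast; ring
  have hlcn : h.coeff n ≠ 0 := by
    rw [hn_def]; exact leadingCoeff_ne_zero.mpr h0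
  have hdc0 : (derivative h).coeff (n - 1) ≠ 0 := by
    rw [hdc]; exact mul_ne_zero hlcn (Nat.cast_ne_zero.mpr (by omega))
  have hd0 : derivative h ≠ 0 := fun hz => by simp [hz] at hdc0
  have hdeg_le : (derivative h).natDegree ≤ n - 1 := by
    have := natDegree_derivative_lt (show h.natDegree ≠ 0 by omega)
    omega
  have hdeg_ge : n - 1 ≤ (derivative h).natDegree := le_natDegree_of_ne_zero hdc0
  have hdeg : (derivative h).natDegree = n - 1 := le_antisymm hdeg_le hdeg_ge
  have hcard' : (derivative h).roots.card = n - 1 := by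
    rw [splits_iff_card_roots.mp (IsAlgClosed.splits _), hdeg]
  set R := h.roots.toFinset with hR
  have hsub : (derivative h).roots.toFinset ⊆ R := by
    intro z hz
    rw [Multiset.mem_toFinset, mem_roots hd0] at hz
    rw [Multiset.mem_toFinset, mem_roots h0]
    exact hcrit z hz
  have hsum2 : ∑ z ∈ R, h.roots.count z = n := by
    rw [Multiset.toFinset_sum_count_eq, hcard]
  have hsum1 : ∑ z ∈ R, (derivative h).roots.count z = n - 1 := by
    rw [← hcard', ← Multiset.toFinset_sum_count_eq (derivative h).roots]
    exact (Finset.sum_subset hsub (fun z _ hz => by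
      rwa [Multiset.count_eq_zero, ← Multiset.mem_toFinset])).symm
  have hmul : ∀ z ∈ R, (derivative h).roots.count z = h.roots.count z - 1 ∧ 1 ≤ h.roots.count z := by
    intro z hz
    rw [Multiset.mem_toFinset, mem_roots h0] at hz
    constructor
    · rw [count_roots, count_roots, derivative_rootMultiplicity_of_root hz]
    · rw [count_roots]
      exact (rootMultiplicity_pos h0).mpr hz
  have hkey : (n - 1) + R.card = n := by
    have e1 : ∑ z ∈ R, (Multiset.count z (derivative h).roots + 1) = n := by
      rw [← hsum2]
      apply Finset.sum_congr rfl
      intro z hz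
      have := hmul z hz
      omega
    rw [Finset.sum_add_distrib, hsum1] at e1
    simpa using e1
  have hcard1 : R.card = 1 := by omega
  obtain ⟨r, hr⟩ := Finset.card_eq_one.mp hcard1
  refine ⟨r, ?_⟩
  have hrep : h.roots = Multiset.replicate n r := by
    rw [Multiset.eq_replicate]
    refine ⟨hcard, fun b hb => ?_⟩
    have : b ∈ R := Multiset.mem_toFinset.mpr hb
    rw [hr, Finset.mem_singleton] at this; exact this
  have := hsplit.eq_prod_roots
  rw [hrep, Multiset.map_replicate, Multiset.prod_replicate] at this
  exact this

lemma case2_helper (lc r e u a b c s : ℂ) (n : ℕ) (hn : 0 < n)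
    (hs : a * lc * (u - r) ^ n = s) (hsalg : IsAlgebraic ℚ s) (hs0 : s ≠ 0)
    (ht : IsAlgebraic ℚ (a * e + b))
    (hderiv : (C a * (C lc * (X - C r) ^ n + C e).comp (C c * X + C u) + C b).derivative.eval 0 = 1) :
    ∀ m : ℕ, IsAlgebraic ℚ ((C a * (C lc * (X - C r) ^ n + C e).comp (C c * X + C u) + C b).coeff m) := by
  have hw : u - r ≠ 0 := by
    intro hz
    rw [hz, zero_pow (by omega), mul_zero] at hs
    exact hs0 hs.symm
  set w := u - r with hwdef
  obtain ⟨q, hc⟩ : ∃ q, c = w * q := ⟨c / w, by field_simp⟩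
  have hu' : u = w + r := by rw [hwdef]; ring
  have h1 : (C c * X + C u : ℂ[X]) = C w * (C q * X + 1) + C r := by
    rw [hc, hu']; simp only [C_mul, C_add]; ring
  have E : C a * (C lc * (X - C r) ^ n + C e).comp (C c * X + C u) + C b
      = C s * (C q * X + 1) ^ n + C (a * e + b) := by
    simp only [add_comp, mul_comp, pow_comp, sub_comp, X_comp, C_comp]
    rw [h1, add_sub_cancel_right, mul_pow, ← C_pow, ← hs]
    simp only [C_mul, C_pow, C_add]
    ring
  rw [E] at hderiv ⊢
  have hn0 : (n : ℂ) ≠ 0 := Nat.cast_ne_zero.mpr (by omega)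
  have hqval : s * (q * (n : ℂ)) = 1 := by
    have h2 := hderiv
    simp [derivative_pow, eval_pow, eval_mul, eval_add] at h2
    linear_combination h2
  have hq0 : q = (s * (n : ℂ))⁻¹ := by
    field_simp
    linear_combination hqval
  have hqalg : IsAlgebraic ℚ q := by
    rw [hq0]
    apply IsAlgebraic.inv
    have hnalg : IsAlgebraic ℚ ((n : ℕ) : ℂ) := isAlgebraic_nat n
    exact (hsalg.isIntegral.mul hnalg.isIntegral).isAlgebraic
  -- conclude via lifts
  rw [coeffs_alg_iff_lifts]
  have hCs := Polynomial.C'_mem_lifts ((alg_iff_mem_range s).mp hsalg)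
  have hCq := Polynomial.C'_mem_lifts ((alg_iff_mem_range q).mp hqalg)
  have hCt := Polynomial.C'_mem_lifts ((alg_iff_mem_range _).mp ht)
  exact add_mem (mul_mem hCs (pow_mem (add_mem (mul_mem hCq (Polynomial.X_mem_lifts _)) (one_mem _)) n)) hCt

lemma neg_one_alg : IsAlgebraic ℚ (-1 : ℂ) :=
  (isAlgebraic_one (R := ℚ) (A := ℂ)).isIntegral.neg.isAlgebraic

lemma single_case (f : ℂ[X]) (hn2 : 2 ≤ f.natDegree) (halg : ∀ n, IsAlgebraic ℚ (f.coeff n))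
    (e u a b c : ℂ)
    (hcrit : ∀ z : ℂ, (derivative f).eval z = 0 → f.eval z = e)
    (hv : a * f.eval u + b = 0)
    (ht1 : a * e + b = 1 ∨ a * e + b = -1)
    (hderiv : (C a * f.comp (C c * X + C u) + C b).derivative.eval 0 = 1) :
    ∀ m : ℕ, IsAlgebraic ℚ ((C a * f.comp (C c * X + C u) + C b).coeff m) := by
  set h : ℂ[X] := f - C e with hh_def
  have hnd : h.natDegree = f.natDegree := natDegree_sub_C
  have hcrit' : ∀ z : ℂ, (derivative h).eval z = 0 → h.eval z = 0 := by
    intro z hz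
    rw [hh_def, derivative_sub, derivative_C, sub_zero] at hz
    rw [hh_def, eval_sub, eval_C, hcrit z hz, sub_self]
  obtain ⟨r, hr⟩ := single_root (by omega : 2 ≤ h.natDegree) hcrit'
  rw [hnd] at hr
  have hfeq : f = C h.leadingCoeff * (X - C r) ^ f.natDegree + C e := by
    rw [← hr, hh_def]; ring
  set lc := h.leadingCoeff
  set n := f.natDegree
  have heval : f.eval u = lc * (u - r) ^ n + e := by
    conv_lhs => rw [hfeq]
    simp [eval_pow]
  have hs : a * lc * (u - r) ^ n = -(a * e + b) := by
    linear_combination hv - a * heval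
  have htalg : IsAlgebraic ℚ (a * e + b) := by
    rcases ht1 with h1 | h1 <;> rw [h1]
    · exact isAlgebraic_one
    · exact neg_one_alg
  have hsalg : IsAlgebraic ℚ (-(a * e + b)) := by
    rcases ht1 with h1 | h1 <;> rw [h1]
    · exact neg_one_alg
    · simpa using isAlgebraic_one (R := ℚ) (A := ℂ)
  have hs0 : -(a * e + b) ≠ 0 := by
    rcases ht1 with h1 | h1 <;> rw [h1] <;> norm_num
  rw [hfeq] at hderiv ⊢
  exact case2_helper lc r e u a b c _ n (by omega) hs hsalg hs0 htalg hderiv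

lemma key_deriv_eq (f : ℂ[X]) (a b c u : ℂ)
    (hderiv : (C a * f.comp (C c * X + C u) + C b).derivative.eval 0 = 1) :
    a * (c * (derivative f).eval u) = 1 := by
  simp only [derivative_add, derivative_mul, derivative_C, zero_mul, add_zero, zero_add,
    derivative_comp, derivative_X, mul_one, eval_mul, eval_C, eval_comp, eval_add, eval_X,
    mul_zero] at hderiv
  linear_combination hderiv

/-- If an unbiased Shabat polynomial `f` has algebraic coefficients, then so does
the biased Shabat polynomial `f₁ = ψ ∘ f ∘ η` obtained from it by the unique
normalizing pair of changes of coordinates. -/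
theorem biasing_preserves_algebraic_coefficients (f : Polynomial ℂ)
    (hf : 0 < f.natDegree) (halg : ∀ n : ℕ, IsAlgebraic ℚ (f.coeff n))
    (vb vw : ℂ) (hne : vb ≠ vw)
    (hS : ∀ u : ℂ, f.derivative.eval u = 0 → f.eval u = vb ∨ f.eval u = vw)
    (u : ℂ) (hu : f.eval u = (vb + vw) / 2)
    (a b c d : ℂ) (ha : a ≠ 0) (hc : c ≠ 0)
    (hpsib : a * vb + b = -1) (hpsiw : a * vw + b = 1) (heta : d = u)
    (hderiv : (C a * f.comp (C c * X + C d) + C b).derivative.eval 0 = 1) :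
    ∀ n : ℕ, IsAlgebraic ℚ ((C a * f.comp (C c * X + C d) + C b).coeff n) := by
  rw [heta] at hderiv ⊢
  have hav0 : a * f.eval u + b = 0 := by
    rw [hu]; linear_combination (hpsib + hpsiw) / 2
  by_cases hdeg : f.natDegree ≤ 1
  · -- degree one case
    have hnd1 : f.natDegree = 1 := by omega
    have hf1 : f = C (f.coeff 1) * X + C (f.coeff 0) := eq_X_add_C_of_natDegree_le_one hdeg
    have hlc : f.coeff 1 ≠ 0 := by
      have := leadingCoeff_ne_zero.mpr (fun hz : f = 0 => by simp [hz] at hnd1)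
      rwa [leadingCoeff, hnd1] at this
    obtain ⟨e, he⟩ : ∃ e : ℂ, a * e = a * f.eval u - 1 :=
      ⟨(a * f.eval u - 1) / a, by field_simp⟩
    obtain ⟨r, hr⟩ : ∃ r : ℂ, f.coeff 1 * r = e - f.coeff 0 :=
      ⟨(e - f.coeff 0) / f.coeff 1, by field_simp⟩
    have heval : f.eval u = f.coeff 1 * u + f.coeff 0 := by
      conv_lhs => rw [hf1]
      simp
    have hfeq : f = C (f.coeff 1) * (X - C r) ^ 1 + C e := by
      conv_lhs => rw [hf1]
      rw [pow_one]
      simp only [mul_sub, ← C_mul, hr]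
      simp only [C_sub]
      ring
    have hs : a * f.coeff 1 * (u - r) ^ 1 = 1 := by
      rw [pow_one]
      linear_combination -a * hr - he - a * heval
    have ht : a * e + b = -1 := by linear_combination he + hav0
    rw [hfeq] at hderiv ⊢
    exact case2_helper (f.coeff 1) r e u a b c 1 1 one_pos hs isAlgebraic_one one_ne_zero
      (by rw [ht]; exact neg_one_alg) hderiv
  · push_neg at hdeg
    have hn2 : 2 ≤ f.natDegree := hdeg
    have fdalg := deriv_coeffs_alg halg
    have hdc : (derivative f).coeff (f.natDegree - 1) ≠ 0 := by
      have e1 : f.natDegree - 1 + 1 = f.natDegree := by omega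
      rw [coeff_derivative, e1]
      refine mul_ne_zero (leadingCoeff_ne_zero.mpr (fun hz => by simp [hz] at hn2)) ?_
      exact_mod_cast Nat.cast_add_one_ne_zero (R := ℂ) (f.natDegree - 1)
    have hfd0 : derivative f ≠ 0 := fun hz => by simp [hz] at hdc
    have hfddeg : 0 < (derivative f).natDegree ∨ 0 < (derivative f).natDegree := by
      left
      have := le_natDegree_of_ne_zero hdc
      omega
    have hdegpos : (derivative f).degree ≠ 0 := by
      have h1 : 0 < (derivative f).natDegree := by
        have := le_natDegree_of_ne_zero hdc; omega
      have := natDegree_pos_iff_degree_pos.mp h1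
      exact ne_of_gt this
    obtain ⟨z0, hz0⟩ := IsAlgClosed.exists_root (derivative f) hdegpos
    have hz0' : (derivative f).eval z0 = 0 := hz0
    have z0alg : IsAlgebraic ℚ z0 := root_alg hfd0 fdalg hz0'
    by_cases hb : ∃ z : ℂ, (derivative f).eval z = 0 ∧ f.eval z = vb
    · by_cases hw : ∃ z : ℂ, (derivative f).eval z = 0 ∧ f.eval z = vw
      · -- both critical values attained : everything is algebraic
        obtain ⟨z1, hz1, hz1v⟩ := hb
        obtain ⟨z2, hz2, hz2v⟩ := hw
        have vbalg : IsAlgebraic ℚ vb := hz1v ▸ eval_alg halg (root_alg hfd0 fdalg hz1)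
        have vwalg : IsAlgebraic ℚ vw := hz2v ▸ eval_alg halg (root_alg hfd0 fdalg hz2)
        have hsub : vw - vb ≠ 0 := sub_ne_zero_of_ne (Ne.symm hne)
        have haval : a = 2 * (vw - vb)⁻¹ := by
          field_simp
          linear_combination hpsiw - hpsib
        have aalg : IsAlgebraic ℚ a := by
          rw [haval]
          have h2 : IsAlgebraic ℚ (2 : ℂ) := by exact_mod_cast isAlgebraic_nat (R := ℚ) (A := ℂ) 2
          exact (h2.isIntegral.mul
            ((vwalg.isIntegral.sub vbalg.isIntegral).isAlgebraic.inv).isIntegral).isAlgebraic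
        have balg : IsAlgebraic ℚ b := by
          have : b = 1 - a * vw := by linear_combination hpsiw
          rw [this]
          exact ((isAlgebraic_one (R := ℚ) (A := ℂ)).isIntegral.sub
            (aalg.isIntegral.mul vwalg.isIntegral)).isAlgebraic
        have v0alg : IsAlgebraic ℚ ((vb + vw) / 2) := by
          rw [div_eq_mul_inv]
          have h2 : IsAlgebraic ℚ ((2 : ℂ)⁻¹) := by
            apply IsAlgebraic.inv
            exact_mod_cast isAlgebraic_nat (R := ℚ) (A := ℂ) 2
          exact ((vbalg.isIntegral.add vwalg.isIntegral).mul h2.isIntegral).isAlgebraic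
        have gcoeffs : ∀ m : ℕ, IsAlgebraic ℚ ((f - C ((vb + vw) / 2)).coeff m) := by
          intro m
          rw [coeff_sub, coeff_C]
          split_ifs with hm
          · exact ((halg m).isIntegral.sub v0alg.isIntegral).isAlgebraic
          · simpa using halg m
        have g0 : f - C ((vb + vw) / 2) ≠ 0 := by
          intro hz
          have : f.natDegree = 0 := by
            have := natDegree_sub_C (p := f) (a := (vb + vw) / 2)
            rw [hz] at this
            simpa using this.symm
          omega
        have ualg : IsAlgebraic ℚ u := by
          apply root_alg g0 gcoeffs
          simp [hu]
        have hkey := key_deriv_eq f a b c u hderiv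
        have fualg : IsAlgebraic ℚ ((derivative f).eval u) := eval_alg fdalg ualg
        have hprodne : a * (derivative f).eval u ≠ 0 := by
          intro hz
          rw [show a * (c * (derivative f).eval u) = a * (derivative f).eval u * c by ring, hz,
            zero_mul] at hkey
          exact zero_ne_one hkey
        have hcval : c = (a * (derivative f).eval u)⁻¹ := by
          apply eq_inv_of_mul_eq_one_right
          linear_combination hkey
        have calg : IsAlgebraic ℚ c := by
          rw [hcval]
          exact (aalg.isIntegral.mul fualg.isIntegral).isAlgebraic.inv
        -- conclude
        rw [coeffs_alg_iff_lifts]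
        have hfmem := (coeffs_alg_iff_lifts f).mp halg
        have hqmem : (C c * X + C u) ∈ Polynomial.lifts (algebraMap (algebraicClosure ℚ ℂ) ℂ) :=
          add_mem (mul_mem (Polynomial.C'_mem_lifts ((alg_iff_mem_range c).mp calg))
            (Polynomial.X_mem_lifts _)) (Polynomial.C'_mem_lifts ((alg_iff_mem_range u).mp ualg))
        exact add_mem (mul_mem (Polynomial.C'_mem_lifts ((alg_iff_mem_range a).mp aalg))
          (comp_mem_lifts hfmem hqmem)) (Polynomial.C'_mem_lifts ((alg_iff_mem_range b).mp balg))
      · -- all critical values equal vb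
        push_neg at hw
        have hcrit : ∀ z : ℂ, (derivative f).eval z = 0 → f.eval z = vb := by
          intro z hz
          rcases hS z hz with h1 | h1
          · exact h1
          · exact absurd h1 (hw z hz)
        apply single_case f hn2 halg vb u a b c hcrit hav0 (Or.inr hpsib) hderiv
    · -- all critical values equal vw
      push_neg at hb
      have hcrit : ∀ z : ℂ, (derivative f).eval z = 0 → f.eval z = vw := by
        intro z hz
        rcases hS z hz with h1 | h1
        · exact absurd h1 (hb z hz)
        · exact h1
      apply single_case f hn2 halg vw u a b c hcrit hav0 (Or.inl hpsiw) hderiv
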